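/- Let χ be a non-trivial character of 𝕋⁴, χ(x,y,u,v) = e^{2πi(ax+by+cu+dv)} with (a,b,c,d) ≠ (0,0,0,0). Then for all sufficiently large coprime integers r, s (threshold depending only on χ), and every c₁ ∈ [0,1/r), the restriction of χ to the coset I_{c₁} = {(x, y+c₁, u, v) : s·x = r·y, u,v ∈ 𝕋} is not constant. -/

import Mathlib

open Complex Real

private lemma fourier_real' (m : ℤ) (x : ℝ) :
    fourier m ((x : ℝ) : UnitAddCircle) = Complex.exp (2 * π * Complex.I * m * x) := by
  rw [fourier_coe_apply]; norm_num

private lemma nsmul_coe' (n : ℕ) (x : ℝ) :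
    n • ((x:ℝ) : UnitAddCircle) = ((n * x : ℝ) : UnitAddCircle) := by
  rw [← AddCircle.coe_nsmul]; norm_num [nsmul_eq_mul]

private lemma sub_coe' (x y : ℝ) :
    ((x + y : ℝ) : UnitAddCircle) - ((y:ℝ) : UnitAddCircle) = ((x:ℝ) : UnitAddCircle) := by
  rw [← AddCircle.coe_sub]; norm_num

private lemma half_case (m : ℤ) (hm : m ≠ 0) :
    Complex.exp (2 * π * Complex.I * m * (1 / (2 * m))) = -1 := by
  have : (2 : ℂ) * π * Complex.I * m * (1 / (2 * m)) = π * Complex.I := by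
    have hm' : (m : ℂ) ≠ 0 := Int.cast_ne_zero.mpr hm
    field_simp
  rw [this, Complex.exp_pi_mul_I]

/-- A non-trivial character `χ(x,y,u,v) = e^{2πi(ax+by+cu+dv)}` of `𝕋⁴` is non-constant
on each coset `I_{c₁} = {(x, y+c₁, u, v) : s x = r y}`, for all sufficiently large
coprime `r, s` (with the threshold depending only on `χ`). -/
theorem stmt18 (a b c d : ℤ) (hne : ¬(a = 0 ∧ b = 0 ∧ c = 0 ∧ d = 0)) :
    ∃ R : ℕ, ∀ r s : ℕ, R ≤ r → R ≤ s → Nat.Coprime r s →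
      ∀ c₁ : ℝ, c₁ ∈ Set.Ico (0 : ℝ) (1 / (r : ℝ)) →
      ∃ p q : UnitAddCircle × UnitAddCircle × UnitAddCircle × UnitAddCircle,
        s • p.1 = r • (p.2.1 - ((c₁ : ℝ) : UnitAddCircle)) ∧
        s • q.1 = r • (q.2.1 - ((c₁ : ℝ) : UnitAddCircle)) ∧
        fourier a p.1 * fourier b p.2.1 * fourier c p.2.2.1 * fourier d p.2.2.2 ≠
          fourier a q.1 * fourier b q.2.1 * fourier c q.2.2.1 * fourier d q.2.2.2 := by
  refine ⟨a.natAbs + b.natAbs + 1, ?_⟩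
  intro r s hr hs hrs c₁ _
  have hq0 : (s : ℕ) • ((((0:ℝ)) : UnitAddCircle)) =
      (r : ℕ) • ((((c₁:ℝ)) : UnitAddCircle) - ((c₁ : ℝ) : UnitAddCircle)) := by
    simp
  by_cases hc : c ≠ 0
  · -- vary the third coordinate
    refine ⟨(((0:ℝ)), ((c₁:ℝ)), ((1/(2*c):ℝ)), ((0:ℝ))), (((0:ℝ)), ((c₁:ℝ)), ((0:ℝ)), ((0:ℝ))),
      hq0, hq0, ?_⟩
    simp only [fourier_real']
    push_cast
    rw [half_case c hc]
    intro h
    have hA : Complex.exp (2 * π * Complex.I * a * 0) * Complex.exp (2 * π * Complex.I * b * c₁)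
        ≠ 0 := mul_ne_zero (Complex.exp_ne_zero _) (Complex.exp_ne_zero _)
    simp only [mul_zero, Complex.exp_zero, mul_one, mul_neg_one] at h hA
    apply hA
    linear_combination (-1/2 : ℂ) * h
  by_cases hd : d ≠ 0
  · refine ⟨(((0:ℝ)), ((c₁:ℝ)), ((0:ℝ)), ((1/(2*d):ℝ))), (((0:ℝ)), ((c₁:ℝ)), ((0:ℝ)), ((0:ℝ))),
      hq0, hq0, ?_⟩
    simp only [fourier_real']
    push_cast
    rw [half_case d hd]
    intro h
    have hA : Complex.exp (2 * π * Complex.I * a * 0) * Complex.exp (2 * π * Complex.I * b * c₁)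
        ≠ 0 := mul_ne_zero (Complex.exp_ne_zero _) (Complex.exp_ne_zero _)
    simp only [mul_zero, Complex.exp_zero, mul_one, mul_neg_one] at h hA
    apply hA
    linear_combination (-1/2 : ℂ) * h
  · -- a ≠ 0 or b ≠ 0
    push_neg at hc hd hne
    have hab : a ≠ 0 ∨ b ≠ 0 := by
      by_contra h
      push_neg at h
      exact (hne h.1 h.2 hc) hd
    set n : ℤ := a * r + b * s with hn
    have hrpos : 0 < r := lt_of_lt_of_le (Nat.succ_pos _) hr
    have hspos : 0 < s := lt_of_lt_of_le (Nat.succ_pos _) hs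
    have hn0 : n ≠ 0 := by
      intro h0
      have h1 : a * r = -(b * s) := by linarith [hn ▸ h0]
      rcases hab with ha | hb
      · -- r ∣ b * s, r coprime s ⇒ r ∣ b
        by_cases hb : b = 0
        · rw [hb] at h1; simp at h1
          rcases h1 with h1 | h1
          · exact ha h1
          · omega
        · have hdvd : (r : ℤ) ∣ b * s := ⟨-a, by linarith⟩
          have hcop : IsCoprime (r : ℤ) (s : ℤ) := Int.isCoprime_iff_gcd_eq_one.mpr hrs
          have : (r : ℤ) ∣ b := hcop.dvd_of_dvd_mul_right hdvd
          have := Int.le_of_dvd (by positivity : (0:ℤ) < |b|) ((dvd_abs _ _).mpr this)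
          have hb' : |b| = (b.natAbs : ℤ) := Int.abs_eq_natAbs b
          omega
      · by_cases ha : a = 0
        · rw [ha] at h1; simp at h1
          rcases h1 with h1 | h1
          · exact hb h1
          · omega
        · have hdvd : (s : ℤ) ∣ a * r := ⟨-b, by linarith⟩
          have hcop : IsCoprime (s : ℤ) (r : ℤ) := Int.isCoprime_iff_gcd_eq_one.mpr hrs.symm
          have : (s : ℤ) ∣ a := hcop.dvd_of_dvd_mul_right hdvd
          have := Int.le_of_dvd (by positivity : (0:ℤ) < |a|) ((dvd_abs _ _).mpr this)
          have ha' : |a| = (a.natAbs : ℤ) := Int.abs_eq_natAbs a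
          omega
    set t : ℝ := 1 / (2 * n) with ht
    refine ⟨(((r * t : ℝ)), ((s * t + c₁ : ℝ)), ((0:ℝ)), ((0:ℝ))),
      (((0:ℝ)), ((c₁:ℝ)), ((0:ℝ)), ((0:ℝ))), ?_, hq0, ?_⟩
    · show (s:ℕ) • (((r * t : ℝ)) : UnitAddCircle) = (r:ℕ) • (((s * t + c₁ : ℝ) : UnitAddCircle) - ((c₁:ℝ) : UnitAddCircle))
      rw [sub_coe', nsmul_coe', nsmul_coe']
      congr 1
      ring
    · simp only [fourier_real']
      push_cast
      intro h
      have hnc : (a : ℂ) * r + b * s = (n : ℂ) := by rw [hn]; push_cast; ring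
      have ht2r : t * (2 * (n : ℝ)) = 1 := by
        rw [ht]
        have : (n : ℝ) ≠ 0 := Int.cast_ne_zero.mpr hn0
        field_simp
      have ht2 : (t : ℂ) * (2 * (n : ℂ)) = 1 := by exact_mod_cast ht2r
      have key : Complex.exp (2 * π * Complex.I * a * (r * t)) *
          Complex.exp (2 * π * Complex.I * b * (s * t + c₁)) =
          - Complex.exp (2 * π * Complex.I * b * c₁) := by
        have : Complex.exp (2 * π * Complex.I * a * (r * t)) *
            Complex.exp (2 * π * Complex.I * b * (s * t + c₁)) =
            Complex.exp (π * Complex.I) * Complex.exp (2 * π * Complex.I * b * c₁) := by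
          rw [← Complex.exp_add, ← Complex.exp_add]
          congr 1
          linear_combination (2 * (π:ℂ) * Complex.I * (t:ℂ)) * hnc + ((π:ℂ) * Complex.I) * ht2
        rw [this, Complex.exp_pi_mul_I]
        ring
      rw [key] at h
      simp only [mul_zero, Complex.exp_zero, mul_one, neg_mul, one_mul] at h
      have hA : Complex.exp (2 * π * Complex.I * b * c₁) ≠ 0 := Complex.exp_ne_zero _
      apply hA
      linear_combination (-1/2 : ℂ) * h
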